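/- The map Θ sending a complex symmetric matrix N = R + iI with I positive definite to the matrix J = [[I^{-1}R, I^{-1}], [-I - R I^{-1} R, -R I^{-1}]] is a bijection from the Siegel upper half space SH_n onto the set of tamings of the standard symplectic form ω_{2n} on ℝ^{2n}. -/

import Mathlib

open Matrix

/-- The matrix of the standard symplectic form on `ℝ^{2n}`: `Ω = [[0,1],[-1,0]]`. -/
def OmegaMat (n : ℕ) : Matrix (Fin n ⊕ Fin n) (Fin n ⊕ Fin n) ℝ :=
  Matrix.fromBlocks 0 1 (-1) 0

/-- Real part of a complex matrix. -/
def rePart (n : ℕ) (N : Matrix (Fin n) (Fin n) ℂ) : Matrix (Fin n) (Fin n) ℝ :=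
  fun i j => (N i j).re

/-- Imaginary part of a complex matrix. -/
def imPart (n : ℕ) (N : Matrix (Fin n) (Fin n) ℂ) : Matrix (Fin n) (Fin n) ℝ :=
  fun i j => (N i j).im

/-- The map `Θ` from the Siegel upper half space to `2n × 2n` real matrices,
`N = R + iI ↦ [[I⁻¹R, I⁻¹], [-I - R I⁻¹ R, -R I⁻¹]]`. -/
noncomputable def Theta (n : ℕ) (N : Matrix (Fin n) (Fin n) ℂ) :
    Matrix (Fin n ⊕ Fin n) (Fin n ⊕ Fin n) ℝ :=
  Matrix.fromBlocks ((imPart n N)⁻¹ * rePart n N) (imPart n N)⁻¹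
    (-(imPart n N) - rePart n N * (imPart n N)⁻¹ * rePart n N)
    (-(rePart n N * (imPart n N)⁻¹))

/-- `J` is a taming of the standard symplectic form `ω_{2n}`: `J² = -1`, `J` is
symplectic, and `ω(J·,·)` (with matrix `Jᵀ Ω`) is symmetric positive definite. -/
def IsTaming (n : ℕ) (J : Matrix (Fin n ⊕ Fin n) (Fin n ⊕ Fin n) ℝ) : Prop :=
  J * J = -1 ∧ Jᵀ * OmegaMat n * J = OmegaMat n ∧ (Jᵀ * OmegaMat n).PosDef

section Helpers

variable {k l : Type*} [Fintype k] [DecidableEq k] [Fintype l] [DecidableEq l]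

lemma real_conjTranspose (M : Matrix k l ℝ) : Mᴴ = Mᵀ := by
  ext i j; simp [Matrix.conjTranspose_apply]

lemma star_pi_real (x : k → ℝ) : star x = x := by
  funext i; simp

/-- Congruence by an invertible matrix preserves positive definiteness (real case). -/
lemma posDef_congr {A P : Matrix k k ℝ} (hA : A.PosDef) (hP : IsUnit P.det) :
    (P * A * Pᵀ).PosDef := by
  have h1 : (P * A * Pᵀ).IsHermitian := by
    have := Matrix.isHermitian_mul_mul_conjTranspose P hA.1
    rwa [real_conjTranspose] at this
  refine Matrix.PosDef.of_dotProduct_mulVec_pos h1 (fun x hx => ?_)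
  have hx' : Pᵀ *ᵥ x ≠ 0 := by
    intro h0
    apply hx
    have hinv : (Pᵀ)⁻¹ *ᵥ (Pᵀ *ᵥ x) = x := by
      rw [Matrix.mulVec_mulVec, Matrix.nonsing_inv_mul _ (by simpa using hP),
        Matrix.one_mulVec]
    rw [h0, Matrix.mulVec_zero] at hinv
    exact hinv.symm
  have h2 := hA.dotProduct_mulVec_pos hx'
  rw [star_pi_real] at h2 ⊢
  calc (0:ℝ) < (Pᵀ *ᵥ x) ⬝ᵥ A *ᵥ (Pᵀ *ᵥ x) := h2
    _ = x ⬝ᵥ (P * A * Pᵀ) *ᵥ x := by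
        rw [← Matrix.mulVec_mulVec, ← Matrix.mulVec_mulVec, Matrix.dotProduct_mulVec x P,
          ← Matrix.mulVec_transpose]

/-- The lower-right block of a positive definite block matrix is positive definite. -/
lemma posDef_toBlocks₂₂ {M : Matrix (l ⊕ k) (l ⊕ k) ℝ} (hM : M.PosDef) :
    (M.toBlocks₂₂).PosDef := by
  refine Matrix.PosDef.of_dotProduct_mulVec_pos ?_ ?_
  · have h := hM.1
    rw [Matrix.IsHermitian, real_conjTranspose] at h
    ext i j
    have := congrFun (congrFun h (Sum.inr i)) (Sum.inr j)
    simpa [Matrix.toBlocks₂₂, Matrix.conjTranspose_apply] using this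
  · intro v hv
    have hx : (Sum.elim (0 : l → ℝ) v) ≠ 0 := by
      intro h0
      apply hv
      funext j
      exact congrFun h0 (Sum.inr j)
    have h := hM.dotProduct_mulVec_pos hx
    rw [star_pi_real] at h
    rw [← Matrix.fromBlocks_toBlocks M, Matrix.fromBlocks_mulVec] at h
    rw [star_pi_real]
    simpa [sumElim_dotProduct_sumElim] using h

/-- A block diagonal matrix with positive definite blocks is positive definite. -/
lemma posDef_fromBlocks_diag {A : Matrix l l ℝ} {D : Matrix k k ℝ}
    (hA : A.PosDef) (hD : D.PosDef) : (Matrix.fromBlocks A 0 0 D).PosDef := by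
  have hAs : Aᵀ = A := by have := hA.1; rwa [Matrix.IsHermitian, real_conjTranspose] at this
  have hDs : Dᵀ = D := by have := hD.1; rwa [Matrix.IsHermitian, real_conjTranspose] at this
  refine Matrix.PosDef.of_dotProduct_mulVec_pos ?_ ?_
  · rw [Matrix.IsHermitian, real_conjTranspose, Matrix.fromBlocks_transpose, hAs, hDs]
    simp
  · intro x hx
    have hxd : x = Sum.elim (x ∘ Sum.inl) (x ∘ Sum.inr) := (Sum.elim_comp_inl_inr x).symm
    rw [star_pi_real]
    nth_rewrite 1 [hxd]
    nth_rewrite 2 [hxd]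
    rw [Matrix.fromBlocks_mulVec, Matrix.zero_mulVec, Matrix.zero_mulVec, add_zero, zero_add,
      sumElim_dotProduct_sumElim]
    simp only [Sum.elim_comp_inl, Sum.elim_comp_inr]
    by_cases h1 : x ∘ Sum.inl = 0
    · have h2 : x ∘ Sum.inr ≠ 0 := by
        intro h2
        apply hx
        funext i
        cases i with
        | inl i => exact congrFun h1 i
        | inr i => exact congrFun h2 i
      have hpos := hD.dotProduct_mulVec_pos h2
      rw [star_pi_real] at hpos
      have hAnn := hA.posSemidef.dotProduct_mulVec_nonneg (x ∘ Sum.inl)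
      rw [star_pi_real] at hAnn
      linarith
    · have hpos := hA.dotProduct_mulVec_pos h1
      rw [star_pi_real] at hpos
      have hDnn := hD.posSemidef.dotProduct_mulVec_nonneg (x ∘ Sum.inr)
      rw [star_pi_real] at hDnn
      linarith

end Helpers

section Aux

variable {n : ℕ}

/-- The image of `Θ` is always a taming. -/
lemma aux_taming (n : ℕ) (R I : Matrix (Fin n) (Fin n) ℝ) (hRs : Rᵀ = R) (hI : I.PosDef) :
    IsTaming n (Matrix.fromBlocks (I⁻¹ * R) I⁻¹ (-I - R * I⁻¹ * R) (-(R * I⁻¹))) := by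
  have hIs : Iᵀ = I := by have := hI.1; rwa [Matrix.IsHermitian, real_conjTranspose] at this
  have hIdet : IsUnit I.det := (Matrix.isUnit_iff_isUnit_det I).mp hI.isUnit
  have e1 : I⁻¹ * I = 1 := Matrix.nonsing_inv_mul I hIdet
  have e2 : I * I⁻¹ = 1 := Matrix.mul_nonsing_inv I hIdet
  have e1' : ∀ X : Matrix (Fin n) (Fin n) ℝ, I⁻¹ * (I * X) = X := fun X => by
    rw [← Matrix.mul_assoc, e1, Matrix.one_mul]
  have e2' : ∀ X : Matrix (Fin n) (Fin n) ℝ, I * (I⁻¹ * X) = X := fun X => by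
    rw [← Matrix.mul_assoc, e2, Matrix.one_mul]
  have hIinvs : (I⁻¹)ᵀ = I⁻¹ := by rw [Matrix.transpose_nonsing_inv, hIs]
  have hneg1 : (-1 : Matrix (Fin n ⊕ Fin n) (Fin n ⊕ Fin n) ℝ) =
      Matrix.fromBlocks (-1) 0 0 (-1) := by
    rw [← Matrix.fromBlocks_one, Matrix.fromBlocks_neg, neg_zero]
  have hT : (Matrix.fromBlocks (I⁻¹ * R) I⁻¹ (-I - R * I⁻¹ * R) (-(R * I⁻¹)))ᵀ =
      Matrix.fromBlocks (R * I⁻¹) (-I - R * I⁻¹ * R) I⁻¹ (-(I⁻¹ * R)) := by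
    rw [Matrix.fromBlocks_transpose, Matrix.fromBlocks_inj]
    refine ⟨?_, ?_, ?_, ?_⟩ <;>
      simp [Matrix.transpose_sub, Matrix.transpose_neg, Matrix.transpose_mul, hIs, hIinvs,
        hRs, Matrix.mul_assoc]
  refine ⟨?_, ?_, ?_⟩
  · rw [Matrix.fromBlocks_multiply, hneg1, Matrix.fromBlocks_inj]
    refine ⟨?_, ?_, ?_, ?_⟩ <;>
      · simp only [Matrix.mul_assoc, mul_sub, sub_mul, mul_neg, neg_mul, mul_add, add_mul,
          e1, e2, e1', e2', mul_one, one_mul]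
        try abel
  · rw [hT, OmegaMat, Matrix.fromBlocks_multiply, Matrix.fromBlocks_multiply,
      Matrix.fromBlocks_inj]
    refine ⟨?_, ?_, ?_, ?_⟩ <;>
      · simp only [Matrix.mul_assoc, mul_sub, sub_mul, mul_neg, neg_mul, mul_add, add_mul,
          Matrix.mul_zero, Matrix.zero_mul, mul_one, one_mul, e1, e2, e1', e2',
          add_zero, zero_add, neg_zero, neg_neg]
        try abel
  · have key : (Matrix.fromBlocks (I⁻¹ * R) I⁻¹ (-I - R * I⁻¹ * R) (-(R * I⁻¹)))ᵀ *
        OmegaMat n =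
        (Matrix.fromBlocks 1 R 0 1) * (Matrix.fromBlocks I 0 0 I⁻¹) *
          (Matrix.fromBlocks 1 R 0 1)ᵀ := by
      rw [hT, OmegaMat, Matrix.fromBlocks_transpose,
        Matrix.fromBlocks_multiply, Matrix.fromBlocks_multiply, Matrix.fromBlocks_multiply,
        Matrix.fromBlocks_inj]
      refine ⟨?_, ?_, ?_, ?_⟩ <;>
        · simp only [Matrix.mul_assoc, mul_sub, sub_mul, mul_neg, neg_mul, mul_add, add_mul,
            Matrix.mul_zero, Matrix.zero_mul, mul_one, one_mul, e1, e2, e1', e2',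
            add_zero, zero_add, neg_zero, neg_neg, Matrix.transpose_mul, Matrix.transpose_one,
            Matrix.transpose_zero, hIinvs, hRs, hIs, Matrix.transpose_sub, Matrix.transpose_neg]
          try abel
    rw [key]
    apply posDef_congr (posDef_fromBlocks_diag hI hI.inv)
    simp [Matrix.det_fromBlocks_zero₂₁]

end Aux

/-- `Θ` is a bijection from the Siegel upper half space `SH_n` (complex symmetric `n×n`
matrices with positive definite imaginary part) onto the set of tamings of the standard
symplectic form `ω_{2n}` on `ℝ^{2n}`. -/
theorem theta_bijection_siegel_tamings (n : ℕ) :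
    (∀ N : Matrix (Fin n) (Fin n) ℂ,
      N.IsSymm → (imPart n N).PosDef → IsTaming n (Theta n N)) ∧
    (∀ J : Matrix (Fin n ⊕ Fin n) (Fin n ⊕ Fin n) ℝ, IsTaming n J →
      ∃! N : Matrix (Fin n) (Fin n) ℂ,
        (N.IsSymm ∧ (imPart n N).PosDef) ∧ Theta n N = J) := by
  constructor
  · -- forward direction
    intro N hsymm hpos
    have hRs : (rePart n N)ᵀ = rePart n N := by
      ext i j
      have := congrFun (congrFun hsymm.eq i) j
      simpa [rePart, Matrix.transpose_apply] using congrArg Complex.re this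
    exact aux_taming n (rePart n N) (imPart n N) hRs hpos
  · -- backward direction
    rintro J ⟨hJ2, hJsymp, hJpos⟩
    set A := J.toBlocks₁₁ with hA
    set B := J.toBlocks₁₂ with hB
    set C := J.toBlocks₂₁ with hC
    set D := J.toBlocks₂₂ with hDdef
    have hJblocks : J = Matrix.fromBlocks A B C D := (Matrix.fromBlocks_toBlocks J).symm
    have hM : Jᵀ * OmegaMat n = Matrix.fromBlocks (-Cᵀ) Aᵀ (-Dᵀ) Bᵀ := by
      rw [hJblocks, Matrix.fromBlocks_transpose, OmegaMat, Matrix.fromBlocks_multiply]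
      simp only [Matrix.mul_zero, Matrix.mul_one, Matrix.mul_neg, add_zero, zero_add,
        Matrix.mul_zero]
    rw [hM] at hJpos
    -- positive definiteness of B
    have hBTpos : Bᵀ.PosDef := by
      have := posDef_toBlocks₂₂ hJpos
      simpa [Matrix.toBlocks_fromBlocks₂₂] using this
    -- symmetry facts from hermiticity of JᵀΩ
    have hherm := hJpos.1
    rw [Matrix.IsHermitian, real_conjTranspose, Matrix.fromBlocks_transpose] at hherm
    rw [Matrix.fromBlocks_inj] at hherm
    obtain ⟨-, h12, h21, hBsymm⟩ := hherm
    -- h21 : Aᵀᵀ = -Dᵀ, hBsymm : Bᵀᵀ = Bᵀ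
    have hBs : Bᵀ = B := by rw [← hBsymm, Matrix.transpose_transpose]
    have hBpos : B.PosDef := hBs ▸ hBTpos
    have hD : D = -Aᵀ := by
      have := h21
      rw [Matrix.transpose_transpose] at this
      -- this : A = -Dᵀ
      have h := congrArg Matrix.transpose this
      rw [Matrix.transpose_neg, Matrix.transpose_transpose] at h
      -- h : Aᵀ = -D
      rw [h, neg_neg]
    have hBdet : IsUnit B.det := (Matrix.isUnit_iff_isUnit_det B).mp hBpos.isUnit
    have f1 : B⁻¹ * B = 1 := Matrix.nonsing_inv_mul B hBdet
    have f2 : B * B⁻¹ = 1 := Matrix.mul_nonsing_inv B hBdet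
    have f1' : ∀ X : Matrix (Fin n) (Fin n) ℝ, B⁻¹ * (B * X) = X := fun X => by
      rw [← Matrix.mul_assoc, f1, Matrix.one_mul]
    have f2' : ∀ X : Matrix (Fin n) (Fin n) ℝ, B * (B⁻¹ * X) = X := fun X => by
      rw [← Matrix.mul_assoc, f2, Matrix.one_mul]
    have hBinvS : (B⁻¹)ᵀ = B⁻¹ := by rw [Matrix.transpose_nonsing_inv, hBs]
    -- equations from J * J = -1
    rw [hJblocks, Matrix.fromBlocks_multiply,
      show (-1 : Matrix (Fin n ⊕ Fin n) (Fin n ⊕ Fin n) ℝ) =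
        Matrix.fromBlocks (-1) 0 0 (-1) from by
          rw [← Matrix.fromBlocks_one, Matrix.fromBlocks_neg, neg_zero],
      Matrix.fromBlocks_inj] at hJ2
    obtain ⟨q11, q12, -, -⟩ := hJ2
    -- q11 : A * A + B * C = -1, q12 : A * B + B * D = 0
    have hAB : A * B = B * Aᵀ := by
      rw [hD, Matrix.mul_neg, ← sub_eq_add_neg] at q12
      exact sub_eq_zero.mp q12
    -- the candidate preimage
    set R : Matrix (Fin n) (Fin n) ℝ := B⁻¹ * A with hRdef
    have hRsymm : Rᵀ = R := by
      have h := congrArg (fun X => B⁻¹ * X * B⁻¹) hAB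
      rw [Matrix.mul_assoc, Matrix.mul_assoc, f2, Matrix.mul_one, f1', ] at h
      -- h : B⁻¹ * A = Aᵀ * B⁻¹
      rw [hRdef, Matrix.transpose_mul, hBinvS, ← h]
    set N : Matrix (Fin n) (Fin n) ℂ := fun i j => ⟨R i j, B⁻¹ i j⟩ with hNdef
    have hre : rePart n N = R := rfl
    have him : imPart n N = B⁻¹ := rfl
    have hNsymm : N.IsSymm := by
      ext i j
      rw [Matrix.transpose_apply]
      apply Complex.ext
      · exact congrFun (congrFun hRsymm i) j
      · exact congrFun (congrFun hBinvS i) j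
    have hNim : (imPart n N).PosDef := by rw [him]; exact hBpos.inv
    have hBinvinv : (B⁻¹)⁻¹ = B := Matrix.nonsing_inv_nonsing_inv B hBdet
    have hCeq : C = -B⁻¹ - B⁻¹ * (A * A) := by
      have hBC : B * C = -1 - A * A := by
        have : A * A + B * C - A * A = -1 - A * A := by rw [q11]
        rw [← this]; abel
      calc C = B⁻¹ * (B * C) := (f1' C).symm
        _ = -B⁻¹ - B⁻¹ * (A * A) := by
            rw [hBC, mul_sub, Matrix.mul_neg, Matrix.mul_one]
    have hTheta : Theta n N = J := by
      rw [Theta, hre, him, hBinvinv, hJblocks, Matrix.fromBlocks_inj]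
      refine ⟨?_, rfl, ?_, ?_⟩
      · rw [hRdef, f2']
      · rw [hCeq, hRdef]
        congr 1
        rw [Matrix.mul_assoc, Matrix.mul_assoc, f2', ← Matrix.mul_assoc]
      · rw [hRdef, hD, Matrix.mul_assoc, hAB, f1']
    refine ⟨N, ⟨⟨hNsymm, hNim⟩, hTheta⟩, ?_⟩
    -- uniqueness
    rintro N' ⟨⟨hs', hp'⟩, hT'⟩
    have h12 := congrArg Matrix.toBlocks₁₂ hT'
    have h11 := congrArg Matrix.toBlocks₁₁ hT'
    simp only [Theta, Matrix.toBlocks_fromBlocks₁₂, Matrix.toBlocks_fromBlocks₁₁] at h12 h11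
    rw [← hB] at h12
    rw [← hA] at h11
    -- h12 : (imPart n N')⁻¹ = B, h11 : (imPart n N')⁻¹ * rePart n N' = A
    have hdet' : IsUnit (imPart n N').det := (Matrix.isUnit_iff_isUnit_det _).mp hp'.isUnit
    have him' : imPart n N' = B⁻¹ := by
      rw [← Matrix.nonsing_inv_nonsing_inv (imPart n N') hdet', h12]
    have hre' : rePart n N' = R := by
      rw [h12] at h11
      rw [hRdef, ← h11, f1']
    ext i j
    apply Complex.ext
    · exact congrFun (congrFun hre' i) j
    · exact congrFun (congrFun him' i) j
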